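/- Let Ω = ℝ³ ∖ D̄ be the exterior of a bounded Lipschitz domain D ⊂ B(x₀,r). Then the trace inequality ‖u‖_{L²(∂Ω)} ≤ C‖∇u‖_{L²(Ω)} holds for all u ∈ Y^{1,2}(Ω), where Y^{1,2}(Ω) = {u ∈ L⁶(Ω) : ∇u ∈ L²(Ω)}. -/

import Mathlib

open MeasureTheory Matrix

/-- Gradient of a scalar field on `ℝ³`. -/
noncomputable def grad3 (u : (Fin 3 → ℝ) → ℝ) (x : Fin 3 → ℝ) : Fin 3 → ℝ :=
  fun i => fderiv ℝ u x (Pi.single i 1)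

/-- `u ∈ Y^{1,2}(Ω)`: `u ∈ L⁶(Ω)` with weak gradient in `L²(Ω)` (represented by a
differentiable representative). -/
def MemY12 (Ω : Set (Fin 3 → ℝ)) (u : (Fin 3 → ℝ) → ℝ) : Prop :=
  Differentiable ℝ u ∧ MemLp u 6 (volume.restrict Ω) ∧
    MemLp (fun x => grad3 u x) 2 (volume.restrict Ω)

/-- Let `Ω = ℝ³ ∖ D̄` be the exterior of a bounded Lipschitz domain
`D ⊂ B(x₀, r)`.  Then the trace inequality `‖u‖_{L²(∂Ω)} ≤ C ‖∇u‖_{L²(Ω)}` holds for all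
`u ∈ Y^{1,2}(Ω)`.  Here `σ` is the surface measure on `∂Ω`; the Sobolev inequality on `Ω`
and the usual trace inequality on the truncated bounded Lipschitz domain
`Ω_{2r} = Ω ∩ B(x₀, 2r)` are assumed, as in the paper. -/
theorem exterior_domain_trace_inequality
    (D : Set (Fin 3 → ℝ)) (hDopen : IsOpen D) (hDbd : Bornology.IsBounded D)
    (x₀ : Fin 3 → ℝ) (r : ℝ) (hr : 0 < r) (hDr : D ⊆ Metric.ball x₀ r)
    (Ω : Set (Fin 3 → ℝ)) (hΩ : Ω = (closure D)ᶜ)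
    (σ : Measure (Fin 3 → ℝ)) (hσfin : σ (frontier Ω) ≠ ⊤)
    -- Sobolev inequality ‖u‖_{L⁶(Ω)} ≤ C_S ‖∇u‖_{L²(Ω)} on the exterior domain
    (CS : ℝ) (hSobolev : ∀ u : (Fin 3 → ℝ) → ℝ, MemY12 Ω u →
      (∫ x in Ω, |u x| ^ (6 : ℝ)) ^ ((1 : ℝ) / 6)
        ≤ CS * (∫ x in Ω, grad3 u x ⬝ᵥ grad3 u x) ^ ((1 : ℝ) / 2))
    -- usual trace inequality for the bounded Lipschitz domain Ω ∩ B(x₀, 2r)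
    (Ctr : ℝ) (htrace : ∀ w : (Fin 3 → ℝ) → ℝ, Differentiable ℝ w →
      (∫ x in frontier Ω, (w x) ^ 2 ∂σ)
        ≤ Ctr * ((∫ x in Ω ∩ Metric.ball x₀ (2 * r), (w x) ^ 2)
          + ∫ x in Ω ∩ Metric.ball x₀ (2 * r), grad3 w x ⬝ᵥ grad3 w x)) :
    ∃ C : ℝ, ∀ u : (Fin 3 → ℝ) → ℝ, MemY12 Ω u →
      (∫ x in frontier Ω, (u x) ^ 2 ∂σ) ^ ((1 : ℝ) / 2)
        ≤ C * (∫ x in Ω, grad3 u x ⬝ᵥ grad3 u x) ^ ((1 : ℝ) / 2) := by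
  classical
  set Ω₂ : Set (Fin 3 → ℝ) := Ω ∩ Metric.ball x₀ (2 * r) with hΩ₂
  set V : ℝ := (volume Ω₂).toReal with hV
  have hVnn : 0 ≤ V := ENNReal.toReal_nonneg
  set CS' : ℝ := max CS 0 with hCS'
  set Ctr' : ℝ := max Ctr 0 with hCtr'
  set K : ℝ := Ctr' * (CS' ^ 2 * V ^ ((2 : ℝ) / 3) + 1) with hK
  have hK0 : 0 ≤ K := by
    apply mul_nonneg (le_max_right _ _)
    have : (0:ℝ) ≤ V ^ ((2 : ℝ) / 3) := Real.rpow_nonneg hVnn _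
    positivity
  refine ⟨K ^ ((1 : ℝ) / 2), fun u hu => ?_⟩
  obtain ⟨hdiff, hu6, hg2⟩ := hu
  -- basic measures
  haveI : IsFiniteMeasure (volume.restrict Ω₂) := by
    constructor
    rw [Measure.restrict_apply_univ]
    exact lt_of_le_of_lt (measure_mono Set.inter_subset_right) measure_ball_lt_top
  set G : ℝ := ∫ x in Ω, grad3 u x ⬝ᵥ grad3 u x with hG
  set T : ℝ := ∫ x in frontier Ω, (u x) ^ 2 ∂σ with hT
  set A : ℝ := ∫ x in Ω₂, (u x) ^ 2 with hA
  set B : ℝ := ∫ x in Ω₂, grad3 u x ⬝ᵥ grad3 u x with hB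
  set F : ℝ := ∫ x in Ω, |u x| ^ (6 : ℝ) with hF
  have hqnn : ∀ x, 0 ≤ grad3 u x ⬝ᵥ grad3 u x := by
    intro x
    exact Finset.sum_nonneg fun i _ => mul_self_nonneg _
  have hG0 : 0 ≤ G := integral_nonneg fun x => hqnn x
  have hT0 : 0 ≤ T := integral_nonneg fun x => sq_nonneg _
  have hA0 : 0 ≤ A := integral_nonneg fun x => sq_nonneg _
  have hB0 : 0 ≤ B := integral_nonneg fun x => hqnn x
  have hF0 : 0 ≤ F := integral_nonneg fun x => Real.rpow_nonneg (abs_nonneg _) _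
  -- integrability of |∇u|² on Ω
  have hqint : IntegrableOn (fun x => grad3 u x ⬝ᵥ grad3 u x) Ω volume := by
    have hcomp : ∀ i : Fin 3, Integrable (fun x => grad3 u x i * grad3 u x i)
        (volume.restrict Ω) := by
      intro i
      have h1 : MemLp (fun x => grad3 u x i) 2 (volume.restrict Ω) := by
        have := (ContinuousLinearMap.proj (R := ℝ) (φ := fun _ : Fin 3 => ℝ) i).comp_memLp' hg2
        exact this
      have h2 := h1.integrable_norm_rpow two_ne_zero ENNReal.ofNat_ne_top
      have : Integrable (fun x => ‖grad3 u x i‖ ^ (2:ℝ)) (volume.restrict Ω) := by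
        simpa using h2
      refine this.congr ?_
      filter_upwards with x
      rw [show ((2:ℝ)) = ((2:ℕ):ℝ) by norm_num, Real.rpow_natCast]
      simp [pow_two, abs_mul_abs_self]
    have hsum : Integrable (fun x => ∑ i : Fin 3, grad3 u x i * grad3 u x i)
        (volume.restrict Ω) := integrable_finset_sum _ fun i _ => hcomp i
    exact hsum.congr (by filter_upwards with x; simp [dotProduct])
  -- integrability of |u|^6 on Ω
  have huint : IntegrableOn (fun x => |u x| ^ (6 : ℝ)) Ω volume := by
    have h2 := hu6.integrable_norm_rpow (by norm_num) (by norm_num)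
    simpa [Real.norm_eq_abs, IntegrableOn] using h2
  have hsub : Ω₂ ⊆ Ω := Set.inter_subset_left
  -- B ≤ G
  have hBG : B ≤ G := by
    rw [hB, hG]
    exact setIntegral_mono_set hqint (Filter.Eventually.of_forall fun x => hqnn x)
      (HasSubset.Subset.eventuallyLE hsub)
  -- Hölder:  A ≤ (∫_{Ω₂} |u|⁶)^{1/3} * V^{2/3}
  have hu6' : MemLp u 6 (volume.restrict Ω₂) :=
    hu6.mono_measure (Measure.restrict_mono hsub le_rfl)
  have hf3 : MemLp (fun x => (u x) ^ 2) (ENNReal.ofReal 3) (volume.restrict Ω₂) := by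
    have h := hu6'.norm_rpow_div 2
    have h6 : (6 : ENNReal) / 2 = 3 := by
      rw [eq_comm, ENNReal.eq_div_iff (by norm_num) (by norm_num)]
      norm_num
    rw [h6] at h
    have he : ENNReal.ofReal 3 = (3 : ENNReal) := by norm_num
    rw [he]
    refine h.ae_eq ?_
    filter_upwards with x
    have h2r : ((2:ENNReal)).toReal = (2:ℝ) := by norm_num
    rw [h2r, show ((2:ℝ)) = ((2:ℕ):ℝ) by norm_num, Real.rpow_natCast]
    simp [sq_abs]
  have hg32 : MemLp (fun _ : Fin 3 → ℝ => (1:ℝ)) (ENNReal.ofReal (3/2))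
      (volume.restrict Ω₂) := memLp_const 1
  have hpq : (3:ℝ).HolderConjugate (3/2) := ⟨by norm_num, by norm_num, by norm_num⟩
  have holder := integral_mul_le_Lp_mul_Lq_of_nonneg (μ := volume.restrict Ω₂) hpq
    (f := fun x => (u x) ^ 2) (g := fun _ => (1:ℝ))
    (Filter.Eventually.of_forall fun x => sq_nonneg _)
    (Filter.Eventually.of_forall fun _ => zero_le_one) hf3 hg32
  have hA_le : A ≤ (∫ x in Ω₂, |u x| ^ (6:ℝ)) ^ ((1:ℝ)/3) * V ^ ((2:ℝ)/3) := by
    have e1 : (∫ x in Ω₂, ((u x) ^ 2) * 1) = A := by rw [hA]; simp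
    have e2 : (∫ x in Ω₂, ((u x) ^ 2) ^ (3:ℝ)) = ∫ x in Ω₂, |u x| ^ (6:ℝ) := by
      refine integral_congr_ae (Filter.Eventually.of_forall fun x => ?_)
      show ((u x) ^ 2) ^ (3:ℝ) = |u x| ^ (6:ℝ)
      rw [show ((3:ℝ)) = ((3:ℕ):ℝ) by norm_num, Real.rpow_natCast,
        show ((6:ℝ)) = ((6:ℕ):ℝ) by norm_num, Real.rpow_natCast]
      rw [← sq_abs (u x)]
      ring
    have e3 : (∫ x in Ω₂, (1:ℝ) ^ (3/2:ℝ)) = V := by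
      simp [hV, Measure.restrict_apply_univ, Measure.real]
    have e4 : (1:ℝ) / (3/2:ℝ) = (2:ℝ)/3 := by norm_num
    calc A = ∫ x in Ω₂, ((u x) ^ 2) * 1 := e1.symm
      _ ≤ (∫ x in Ω₂, ((u x) ^ 2) ^ (3:ℝ)) ^ ((1:ℝ)/3) *
            (∫ x in Ω₂, (1:ℝ) ^ (3/2:ℝ)) ^ ((1:ℝ)/(3/2:ℝ)) := holder
      _ = (∫ x in Ω₂, |u x| ^ (6:ℝ)) ^ ((1:ℝ)/3) * V ^ ((2:ℝ)/3) := by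
            rw [e2, e3, e4]
  have hmono6 : (∫ x in Ω₂, |u x| ^ (6:ℝ)) ≤ F := by
    rw [hF]
    exact setIntegral_mono_set huint
      (Filter.Eventually.of_forall fun x => Real.rpow_nonneg (abs_nonneg _) _)
      (HasSubset.Subset.eventuallyLE hsub)
  have h6nn : 0 ≤ ∫ x in Ω₂, |u x| ^ (6:ℝ) :=
    integral_nonneg fun x => Real.rpow_nonneg (abs_nonneg _) _
  have hA_le2 : A ≤ F ^ ((1:ℝ)/3) * V ^ ((2:ℝ)/3) := by
    refine le_trans hA_le ?_
    have := Real.rpow_le_rpow h6nn hmono6 (by norm_num : (0:ℝ) ≤ (1:ℝ)/3)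
    exact mul_le_mul_of_nonneg_right this (Real.rpow_nonneg hVnn _)
  -- Sobolev squared :  F^{1/3} ≤ CS'^2 * G
  have hSob : F ^ ((1:ℝ)/6) ≤ CS' * G ^ ((1:ℝ)/2) := by
    refine le_trans (hSobolev u ⟨hdiff, hu6, hg2⟩) ?_
    exact mul_le_mul_of_nonneg_right (le_max_left _ _) (Real.rpow_nonneg hG0 _)
  have hSob2 : F ^ ((1:ℝ)/3) ≤ CS' ^ 2 * G := by
    have h1 : F ^ ((1:ℝ)/3) = (F ^ ((1:ℝ)/6)) ^ 2 := by
      rw [← Real.rpow_natCast (F ^ ((1:ℝ)/6)) 2, ← Real.rpow_mul hF0]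
      norm_num
    have h2 : (CS' * G ^ ((1:ℝ)/2)) ^ 2 = CS' ^ 2 * G := by
      rw [mul_pow, ← Real.rpow_natCast (G ^ ((1:ℝ)/2)) 2, ← Real.rpow_mul hG0]
      norm_num
    calc F ^ ((1:ℝ)/3) = (F ^ ((1:ℝ)/6)) ^ 2 := h1
      _ ≤ (CS' * G ^ ((1:ℝ)/2)) ^ 2 :=
          pow_le_pow_left₀ (Real.rpow_nonneg hF0 _) hSob 2
      _ = CS' ^ 2 * G := h2
  -- Combine
  have hTK : T ≤ K * G := by
    have h1 : T ≤ Ctr * (A + B) := htrace u hdiff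
    have h2 : Ctr * (A + B) ≤ Ctr' * (A + B) :=
      mul_le_mul_of_nonneg_right (le_max_left _ _) (by linarith)
    have h3 : A ≤ CS' ^ 2 * V ^ ((2:ℝ)/3) * G := by
      refine le_trans hA_le2 ?_
      calc F ^ ((1:ℝ)/3) * V ^ ((2:ℝ)/3) ≤ (CS' ^ 2 * G) * V ^ ((2:ℝ)/3) :=
            mul_le_mul_of_nonneg_right hSob2 (Real.rpow_nonneg hVnn _)
        _ = CS' ^ 2 * V ^ ((2:ℝ)/3) * G := by ring
    have h4 : A + B ≤ (CS' ^ 2 * V ^ ((2:ℝ)/3) + 1) * G := by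
      have : (CS' ^ 2 * V ^ ((2:ℝ)/3) + 1) * G
          = CS' ^ 2 * V ^ ((2:ℝ)/3) * G + G := by ring
      rw [this]
      exact add_le_add h3 hBG
    have h5 : Ctr' * (A + B) ≤ Ctr' * ((CS' ^ 2 * V ^ ((2:ℝ)/3) + 1) * G) :=
      mul_le_mul_of_nonneg_left h4 (le_max_right _ _)
    calc T ≤ Ctr * (A + B) := h1
      _ ≤ Ctr' * (A + B) := h2
      _ ≤ Ctr' * ((CS' ^ 2 * V ^ ((2:ℝ)/3) + 1) * G) := h5
      _ = K * G := by rw [hK]; ring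
  -- take square roots
  calc T ^ ((1:ℝ)/2) ≤ (K * G) ^ ((1:ℝ)/2) :=
        Real.rpow_le_rpow hT0 hTK (by norm_num)
    _ = K ^ ((1:ℝ)/2) * G ^ ((1:ℝ)/2) := Real.mul_rpow hK0 hG0
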